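/- The sum of all entries of the inverse of the exponential distance matrix of K_{s,t}, for q ≠ ±1 and q²(s−1)(t−1) ≠ 1, equals (2q(q−1)st − (s+t)(q²−1)) / ((q²−1)(q²(s−1)(t−1) − 1)). -/

import Mathlib

/-- The exponential distance matrix of a connected graph `G`:
the `(u,v)` entry is `q ^ d(u,v)`. -/
noncomputable def expDistMatrix {V : Type*} (G : SimpleGraph V) (q : ℝ) : Matrix V V ℝ :=
  Matrix.of fun u v => q ^ (G.dist u v)

section aux

open Finset

lemma sum_if_const {n : ℕ} (i : Fin n) (a b : ℝ) :
    ∑ k : Fin n, (if i = k then a else b) = n * b + (a - b) := by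
  have h : ∀ k : Fin n, (if i = k then a else b) = b + (if i = k then a - b else 0) := by
    intro k; split <;> ring
  rw [Finset.sum_congr rfl fun k _ => h k, Finset.sum_add_distrib, Finset.sum_const,
    Finset.sum_ite_eq]
  simp [mul_comm]

lemma sum_key {n : ℕ} (i j : Fin n) (a b c e : ℝ) :
    ∑ k : Fin n, (if i = k then a else b) * (c + if k = j then e else 0)
    = n * b * c + (a - b) * c + b * e + (if i = j then (a - b) * e else 0) := by
  have h : ∀ k : Fin n, (if i = k then a else b) * (c + if k = j then e else 0)
      = (if i = k then a else b) * c + (if k = j then (if i = k then a else b) * e else 0) := by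
    intro k; by_cases hk : k = j <;> simp [hk, mul_add]
  rw [Finset.sum_congr rfl fun k _ => h k, Finset.sum_add_distrib, ← Finset.sum_mul,
    sum_if_const, Finset.sum_ite_eq']
  by_cases hij : i = j <;> simp [hij] <;> ring

lemma dist_cbg_ll {s t : ℕ} (ht : 0 < t) (i j : Fin s) (hij : i ≠ j) :
    (completeBipartiteGraph (Fin s) (Fin t)).dist (Sum.inl i) (Sum.inl j) = 2 := by
  set G := completeBipartiteGraph (Fin s) (Fin t)
  obtain ⟨k, -⟩ := Finset.card_pos.mp (by simpa [Finset.card_univ] using ht : 0 < (Finset.univ : Finset (Fin t)).card)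
  have h1 : G.Adj (Sum.inl i) (Sum.inr k) := by simp [G]
  have h2 : G.Adj (Sum.inr k) (Sum.inl j) := by simp [G]
  let p : G.Walk (Sum.inl i) (Sum.inl j) := .cons h1 (.cons h2 .nil)
  have hle : G.dist (Sum.inl i) (Sum.inl j) ≤ 2 := by
    simpa [p] using SimpleGraph.dist_le p
  have hne0 : G.dist (Sum.inl i) (Sum.inl j) ≠ 0 := by
    simp only [ne_eq, SimpleGraph.Reachable.dist_eq_zero_iff p.reachable]
    simp [hij]
  have hne1 : G.dist (Sum.inl i) (Sum.inl j) ≠ 1 := by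
    simp only [ne_eq, SimpleGraph.dist_eq_one_iff_adj]
    simp [G]
  omega

lemma dist_cbg_rr {s t : ℕ} (hs : 0 < s) (i j : Fin t) (hij : i ≠ j) :
    (completeBipartiteGraph (Fin s) (Fin t)).dist (Sum.inr i) (Sum.inr j) = 2 := by
  set G := completeBipartiteGraph (Fin s) (Fin t)
  obtain ⟨k, -⟩ := Finset.card_pos.mp (by simpa [Finset.card_univ] using hs : 0 < (Finset.univ : Finset (Fin s)).card)
  have h1 : G.Adj (Sum.inr i) (Sum.inl k) := by simp [G]
  have h2 : G.Adj (Sum.inl k) (Sum.inr j) := by simp [G]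
  let p : G.Walk (Sum.inr i) (Sum.inr j) := .cons h1 (.cons h2 .nil)
  have hle : G.dist (Sum.inr i) (Sum.inr j) ≤ 2 := by
    simpa [p] using SimpleGraph.dist_le p
  have hne0 : G.dist (Sum.inr i) (Sum.inr j) ≠ 0 := by
    simp only [ne_eq, SimpleGraph.Reachable.dist_eq_zero_iff p.reachable]
    simp [hij]
  have hne1 : G.dist (Sum.inr i) (Sum.inr j) ≠ 1 := by
    simp only [ne_eq, SimpleGraph.dist_eq_one_iff_adj]
    simp [G]
  omega

lemma dist_cbg_lr {s t : ℕ} (i : Fin s) (j : Fin t) :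
    (completeBipartiteGraph (Fin s) (Fin t)).dist (Sum.inl i) (Sum.inr j) = 1 := by
  rw [SimpleGraph.dist_eq_one_iff_adj]; simp

lemma dist_cbg_rl {s t : ℕ} (i : Fin t) (j : Fin s) :
    (completeBipartiteGraph (Fin s) (Fin t)).dist (Sum.inr i) (Sum.inl j) = 1 := by
  rw [SimpleGraph.dist_eq_one_iff_adj]; simp

end aux

set_option maxHeartbeats 1000000 in
/-- The sum of all entries of the inverse of the exponential distance matrix of
`K_{s,t}` equals `(2q(q-1)st - (s+t)(q²-1))/((q²-1)(q²(s-1)(t-1)-1))`. -/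
theorem entrySum_inv_expDistMatrix_completeBipartite (s t : ℕ) (hs : 0 < s) (ht : 0 < t)
    (q : ℝ) (hq0 : q ≠ 0) (hq1 : q ≠ 1) (hq1' : q ≠ -1)
    (hq2 : q ^ 2 * ((s : ℝ) - 1) * ((t : ℝ) - 1) ≠ 1) :
    ∑ i, ∑ j, (expDistMatrix (completeBipartiteGraph (Fin s) (Fin t)) q)⁻¹ i j
      = (2 * q * (q - 1) * s * t - ((s : ℝ) + t) * (q ^ 2 - 1))
        / ((q ^ 2 - 1) * (q ^ 2 * ((s : ℝ) - 1) * ((t : ℝ) - 1) - 1)) := by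
  have h1 : (1 : ℝ) - q ^ 2 ≠ 0 := by
    intro h
    have h' : (q - 1) * (q + 1) = 0 := by linear_combination -h
    rcases mul_eq_zero.mp h' with h'' | h''
    · exact hq1 (by linarith)
    · exact hq1' (by linarith)
  have h2 : (1 : ℝ) - q ^ 2 * ((s : ℝ) - 1) * ((t : ℝ) - 1) ≠ 0 := by
    intro h; exact hq2 (by linarith)
  set d : ℝ := (1 - q ^ 2) * (1 - q ^ 2 * ((s : ℝ) - 1) * ((t : ℝ) - 1)) with hd
  have hdne : d ≠ 0 := mul_ne_zero h1 h2
  set A : Matrix (Fin s ⊕ Fin t) (Fin s ⊕ Fin t) ℝ :=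
    expDistMatrix (completeBipartiteGraph (Fin s) (Fin t)) q with hA
  set B : Matrix (Fin s ⊕ Fin t) (Fin s ⊕ Fin t) ℝ :=
    Matrix.of (fun u v => match u, v with
      | .inl i, .inl j => q ^ 2 * ((t : ℝ) - 1) / d + (if i = j then 1 / (1 - q ^ 2) else 0)
      | .inl _, .inr _ => -q / d
      | .inr _, .inl _ => -q / d
      | .inr i, .inr j => q ^ 2 * ((s : ℝ) - 1) / d + (if i = j then 1 / (1 - q ^ 2) else 0))
    with hB
  have hAll : ∀ (i j : Fin s), A (.inl i) (.inl j) = if i = j then 1 else q ^ 2 := by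
    intro i j
    by_cases h : i = j
    · simp [hA, expDistMatrix, h, SimpleGraph.dist_self]
    · simp [hA, expDistMatrix, h, dist_cbg_ll ht i j h]
  have hArr : ∀ (i j : Fin t), A (.inr i) (.inr j) = if i = j then 1 else q ^ 2 := by
    intro i j
    by_cases h : i = j
    · simp [hA, expDistMatrix, h, SimpleGraph.dist_self]
    · simp [hA, expDistMatrix, h, dist_cbg_rr hs i j h]
  have hAlr : ∀ (i : Fin s) (j : Fin t), A (.inl i) (.inr j) = q := by
    intro i j; simp [hA, expDistMatrix, dist_cbg_lr]
  have hArl : ∀ (i : Fin t) (j : Fin s), A (.inr i) (.inl j) = q := by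
    intro i j; simp [hA, expDistMatrix, dist_cbg_rl]
  have hmul : A * B = 1 := by
    clear_value d
    ext u v
    rw [Matrix.mul_apply, Fintype.sum_sum_type]
    cases u with
    | inl i =>
      cases v with
      | inl j =>
        simp only [hAll, hAlr, hB, Matrix.of_apply]
        rw [sum_key, Finset.sum_const, Finset.card_univ, Fintype.card_fin]
        have hone : (1 : Matrix (Fin s ⊕ Fin t) (Fin s ⊕ Fin t) ℝ) (.inl i) (.inl j)
            = if i = j then 1 else 0 := by
          by_cases h : i = j <;> simp [h, Matrix.one_apply]
        rw [hone]
        by_cases h : i = j <;> simp only [h, if_true, if_false] <;> simp only [nsmul_eq_mul] <;> field_simp <;> subst hd <;> ring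
      | inr j =>
        simp only [hAll, hAlr, hB, Matrix.of_apply]
        rw [← Finset.sum_mul, sum_if_const]
        have : ∀ k : Fin t, q * (q ^ 2 * ((s : ℝ) - 1) / d + if k = j then 1 / (1 - q ^ 2) else 0)
            = q * (q ^ 2 * ((s : ℝ) - 1) / d) + (if k = j then q * (1 / (1 - q ^ 2)) else 0) := by
          intro k; by_cases h : k = j <;> simp [h, mul_add]
        rw [Finset.sum_congr rfl fun k _ => this k, Finset.sum_add_distrib,
          Finset.sum_const, Finset.card_univ, Fintype.card_fin, Finset.sum_ite_eq']
        simp only [Finset.mem_univ, if_true]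
        have hone : (1 : Matrix (Fin s ⊕ Fin t) (Fin s ⊕ Fin t) ℝ) (.inl i) (.inr j) = 0 := by
          simp [Matrix.one_apply]
        rw [hone]
        simp only [nsmul_eq_mul]
        field_simp
        subst hd; ring
    | inr i =>
      cases v with
      | inl j =>
        simp only [hArr, hArl, hB, Matrix.of_apply]
        have e1 : ∀ k : Fin s, q * (q ^ 2 * ((t : ℝ) - 1) / d + if k = j then 1 / (1 - q ^ 2) else 0)
            = q * (q ^ 2 * ((t : ℝ) - 1) / d) + (if k = j then q * (1 / (1 - q ^ 2)) else 0) := by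
          intro k; by_cases h : k = j <;> simp [h, mul_add]
        rw [Finset.sum_congr rfl fun k _ => e1 k, Finset.sum_add_distrib,
          Finset.sum_const, Finset.card_univ, Fintype.card_fin, Finset.sum_ite_eq',
          ← Finset.sum_mul, sum_if_const]
        simp only [Finset.mem_univ, if_true]
        have hone : (1 : Matrix (Fin s ⊕ Fin t) (Fin s ⊕ Fin t) ℝ) (.inr i) (.inl j) = 0 := by
          simp [Matrix.one_apply]
        rw [hone]
        simp only [nsmul_eq_mul]
        field_simp
        subst hd; ring
      | inr j =>
        simp only [hArr, hArl, hB, Matrix.of_apply]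
        rw [sum_key, Finset.sum_const, Finset.card_univ, Fintype.card_fin]
        have hone : (1 : Matrix (Fin s ⊕ Fin t) (Fin s ⊕ Fin t) ℝ) (.inr i) (.inr j)
            = if i = j then 1 else 0 := by
          by_cases h : i = j <;> simp [h, Matrix.one_apply]
        rw [hone]
        by_cases h : i = j <;> simp only [h, if_true, if_false] <;> simp only [nsmul_eq_mul] <;> field_simp <;> subst hd <;> ring
  have hinv : A⁻¹ = B := Matrix.inv_eq_right_inv hmul
  rw [hinv]
  rw [Fintype.sum_sum_type]
  simp only [Fintype.sum_sum_type, hB, Matrix.of_apply]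
  rw [show (∑ i : Fin s, ((∑ j : Fin s, (q ^ 2 * ((t : ℝ) - 1) / d + if i = j then 1 / (1 - q ^ 2) else 0)) + ∑ _j : Fin t, -q / d)) + (∑ i : Fin t, ((∑ _j : Fin s, -q / d) + ∑ j : Fin t, (q ^ 2 * ((s : ℝ) - 1) / d + if i = j then 1 / (1 - q ^ 2) else 0)))
    = (s : ℝ) * ((s : ℝ) * (q ^ 2 * ((t : ℝ) - 1) / d) + 1 / (1 - q ^ 2) + (t : ℝ) * (-q / d))
      + (t : ℝ) * ((s : ℝ) * (-q / d) + ((t : ℝ) * (q ^ 2 * ((s : ℝ) - 1) / d) + 1 / (1 - q ^ 2))) from ?_]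
  · have h1' : q ^ 2 - 1 ≠ 0 := fun h => h1 (by linarith)
    have h2' : q ^ 2 * ((s : ℝ) - 1) * ((t : ℝ) - 1) - 1 ≠ 0 := fun h => h2 (by linarith)
    clear_value d
    rw [eq_div_iff (mul_ne_zero h1' h2')]
    field_simp
    subst hd; ring
  · simp only [Finset.sum_add_distrib, Finset.sum_const, Finset.card_univ, Fintype.card_fin,
      Finset.sum_ite_eq, Finset.mem_univ, if_true, nsmul_eq_mul]
    ring
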